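/- Fractional Grönwall–Bellman inequality with an additional convolved term: Let T > 0, α ∈ (0,1), and a, b > 0. Let u, v ∈ L¹(0,T) be nonnegative almost everywhere and suppose that u(t) + (g_α * v)(t) ≤ a + b (g_α * u)(t) for almost every t ∈ (0,T). Then there exists a constant C, depending only on α, b and T (and not on a, u or v), such that u(t) + (g_α * v)(t) ≤ a·C for almost every t ∈ (0,T). -/

import Mathlib

open MeasureTheory Set
open scoped ENNReal NNReal

/-- The Riemann–Liouville kernel `g_α(t) = t^(α-1)/Γ(α)`. -/
noncomputable def rlKernel (α t : ℝ) : ℝ := t ^ (α - 1) / Real.Gamma α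

/-- Convolution on the half line: `(f * h)(t) = ∫₀ᵗ f(t-s) h(s) ds`. -/
noncomputable def conv (f h : ℝ → ℝ) (t : ℝ) : ℝ := ∫ s in (0:ℝ)..t, f (t - s) * h s


lemma fgbc_rpow_le_max {c d e x : ℝ} (hc : 0 < c) (h1 : c ≤ x) (h2 : x ≤ d) :
    x ^ e ≤ max (c ^ e) (d ^ e) := by
  rcases le_total e 0 with he | he
  · exact le_max_of_le_left (Real.rpow_le_rpow_of_nonpos hc h1 he)
  · exact le_max_of_le_right (Real.rpow_le_rpow (hc.le.trans h1) h2 he)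

lemma fgbc_ii_right {γ : ℝ} (hγ : 0 < γ) (r a b : ℝ) :
    IntervalIntegrable (fun s => (s - r) ^ (γ - 1)) volume a b := by
  have h := (intervalIntegral.intervalIntegrable_rpow' (r := γ - 1)
    (by linarith) (a := a - r) (b := b - r)).comp_sub_right r
  simpa using h

lemma fgbc_ii_left {β : ℝ} (hβ : 0 < β) (t a b : ℝ) :
    IntervalIntegrable (fun s => (t - s) ^ (β - 1)) volume a b := by
  have h := (intervalIntegral.intervalIntegrable_rpow' (r := β - 1)
    (by linarith) (a := t - a) (b := t - b)).comp_sub_left t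
  simpa using h

lemma fgbc_meas_prod {β γ : ℝ} (r t : ℝ) :
    Measurable (fun s => (t - s) ^ (β - 1) * (s - r) ^ (γ - 1) : ℝ → ℝ) := by
  exact ((measurable_const.sub measurable_id).pow measurable_const).mul
    ((measurable_id.sub measurable_const).pow measurable_const)

lemma fgbc_beta_integrableOn {β γ : ℝ} (hβ : 0 < β) (hγ : 0 < γ) {r t : ℝ} (hrt : r < t) :
    IntegrableOn (fun s => (t - s) ^ (β - 1) * (s - r) ^ (γ - 1)) (Ioo r t) := by
  set m := (r + t) / 2 with hm
  have hrm : r < m := by simp [hm]; linarith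
  have hmt : m < t := by simp [hm]; linarith
  have h1 : IntegrableOn (fun s => (t - s) ^ (β - 1) * (s - r) ^ (γ - 1)) (Ioc r m) := by
    have hg : IntegrableOn (fun s => max ((t - m) ^ (β - 1)) ((t - r) ^ (β - 1)) *
        (s - r) ^ (γ - 1)) (Ioc r m) :=
      ((fgbc_ii_right hγ r r m).1.const_mul _)
    refine hg.integrable.mono' (fgbc_meas_prod r t).aestronglyMeasurable ?_
    filter_upwards [ae_restrict_mem measurableSet_Ioc] with s hs
    have h0 : 0 < t - m := by linarith
    have hb : (t - s) ^ (β - 1) ≤ max ((t - m) ^ (β - 1)) ((t - r) ^ (β - 1)) :=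
      fgbc_rpow_le_max h0 (by linarith [hs.2]) (by linarith [hs.1])
    have hnn : (0:ℝ) ≤ (t - s) ^ (β - 1) * (s - r) ^ (γ - 1) :=
      mul_nonneg (Real.rpow_nonneg (by linarith [hs.2]) _)
        (Real.rpow_nonneg (by linarith [hs.1]) _)
    rw [Real.norm_eq_abs, abs_of_nonneg hnn]
    exact mul_le_mul_of_nonneg_right hb (Real.rpow_nonneg (by linarith [hs.1]) _)
  have h2 : IntegrableOn (fun s => (t - s) ^ (β - 1) * (s - r) ^ (γ - 1)) (Ioc m t) := by
    have hg : IntegrableOn (fun s => max ((m - r) ^ (γ - 1)) ((t - r) ^ (γ - 1)) *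
        (t - s) ^ (β - 1)) (Ioc m t) :=
      ((fgbc_ii_left hβ t m t).1.const_mul _)
    refine hg.integrable.mono' (fgbc_meas_prod r t).aestronglyMeasurable ?_
    filter_upwards [ae_restrict_mem measurableSet_Ioc] with s hs
    have h0 : 0 < m - r := by linarith
    have hb : (s - r) ^ (γ - 1) ≤ max ((m - r) ^ (γ - 1)) ((t - r) ^ (γ - 1)) :=
      fgbc_rpow_le_max h0 (by linarith [hs.1]) (by linarith [hs.2])
    have hnn : (0:ℝ) ≤ (t - s) ^ (β - 1) * (s - r) ^ (γ - 1) :=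
      mul_nonneg (Real.rpow_nonneg (by linarith [hs.2]) _)
        (Real.rpow_nonneg (by linarith [hs.1]) _)
    rw [Real.norm_eq_abs, abs_of_nonneg hnn]
    calc (t - s) ^ (β - 1) * (s - r) ^ (γ - 1)
        ≤ (t - s) ^ (β - 1) * max ((m - r) ^ (γ - 1)) ((t - r) ^ (γ - 1)) :=
          mul_le_mul_of_nonneg_left hb (Real.rpow_nonneg (by linarith [hs.2]) _)
      _ = _ := mul_comm _ _
  exact (h1.union h2).mono_set (fun s hs => by
    rcases le_total s m with h | h
    · exact Or.inl ⟨hs.1, h⟩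
    · rcases eq_or_lt_of_le h with h' | h'
      · exact Or.inl ⟨hs.1, h'.ge⟩
      · exact Or.inr ⟨h', hs.2.le⟩)


lemma fgbc_integral_kernel {γ : ℝ} (hγ : 0 < γ) {r t : ℝ} (h : r ≤ t) :
    ∫ s in r..t, (t - s) ^ (γ - 1) = (t - r) ^ γ / γ := by
  rw [intervalIntegral.integral_comp_sub_left (fun x => x ^ (γ - 1)) t]
  rw [show (∫ (x : ℝ) in t - t..t - r, x ^ (γ - 1)) = ((t-r)^(γ-1+1) - (t-t)^(γ-1+1))/(γ-1+1)
    from integral_rpow (Or.inl (by linarith))]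
  rw [sub_self, Real.zero_rpow (by linarith)]
  ring_nf

noncomputable def fgbcB (β γ : ℝ) : ℝ := ∫ x in (0:ℝ)..1, (1 - x) ^ (β - 1) * x ^ (γ - 1)

lemma fgbcB_nonneg (β γ : ℝ) : 0 ≤ fgbcB β γ := by
  apply intervalIntegral.integral_nonneg (by norm_num)
  intro x hx
  exact mul_nonneg (Real.rpow_nonneg (by linarith [hx.2]) _)
    (Real.rpow_nonneg (by linarith [hx.1]) _)

lemma fgbc_beta_eval {β γ : ℝ} (hβ : 0 < β) (hγ : 0 < γ) {r t : ℝ} (hrt : r < t) :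
    ∫ s in r..t, (t - s) ^ (β - 1) * (s - r) ^ (γ - 1)
      = (t - r) ^ (β + γ - 1) * fgbcB β γ := by
  set d := t - r with hd
  have hd0 : 0 < d := by simp [hd]; linarith
  have e1 : ∫ s in r..t, (t - s) ^ (β - 1) * (s - r) ^ (γ - 1)
      = ∫ y in (0:ℝ)..d, (d - y) ^ (β - 1) * y ^ (γ - 1) := by
    have := intervalIntegral.integral_comp_sub_right
      (fun y => (d - y) ^ (β - 1) * y ^ (γ - 1)) r (a := r) (b := t)
    rw [sub_self] at this
    rw [← this]
    apply intervalIntegral.integral_congr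
    intro s _
    show (t - s) ^ (β - 1) * (s - r) ^ (γ - 1) = (d - (s - r)) ^ (β - 1) * (s - r) ^ (γ - 1)
    have : t - s = d - (s - r) := by ring
    rw [this]
  have e2 : ∫ x in (0:ℝ)..1, (d - d * x) ^ (β - 1) * (d * x) ^ (γ - 1)
      = d⁻¹ • ∫ y in (0:ℝ)..d, (d - y) ^ (β - 1) * y ^ (γ - 1) := by
    have := intervalIntegral.integral_comp_mul_left
      (fun y => (d - y) ^ (β - 1) * y ^ (γ - 1)) hd0.ne' (a := (0:ℝ)) (b := 1)
    simpa using this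
  have e3 : ∫ x in (0:ℝ)..1, (d - d * x) ^ (β - 1) * (d * x) ^ (γ - 1)
      = d ^ (β - 1) * d ^ (γ - 1) * fgbcB β γ := by
    rw [fgbcB, ← intervalIntegral.integral_const_mul]
    apply intervalIntegral.integral_congr
    intro x hx
    rw [uIcc_of_le (by norm_num : (0:ℝ) ≤ 1)] at hx
    have hx0 : 0 ≤ x := hx.1
    have hx1 : 0 ≤ 1 - x := by linarith [hx.2]
    show (d - d * x) ^ (β - 1) * (d * x) ^ (γ - 1)
      = d ^ (β - 1) * d ^ (γ - 1) * ((1 - x) ^ (β - 1) * x ^ (γ - 1))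
    have : d - d * x = d * (1 - x) := by ring
    rw [this, Real.mul_rpow hd0.le hx1, Real.mul_rpow hd0.le hx0]
    ring
  rw [e1]
  have : ∫ y in (0:ℝ)..d, (d - y) ^ (β - 1) * y ^ (γ - 1)
      = d * (d ^ (β - 1) * d ^ (γ - 1) * fgbcB β γ) := by
    rw [← e3, e2, smul_eq_mul]
    field_simp
  rw [this]
  have : d * (d ^ (β - 1) * d ^ (γ - 1)) = d ^ (β + γ - 1) := by
    calc d * (d ^ (β - 1) * d ^ (γ - 1)) = d ^ (1:ℝ) * d ^ ((β - 1) + (γ - 1)) := by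
          rw [Real.rpow_one, ← Real.rpow_add hd0]
      _ = d ^ ((1:ℝ) + ((β - 1) + (γ - 1))) := (Real.rpow_add hd0 _ _).symm
      _ = d ^ (β + γ - 1) := by ring_nf
  rw [← mul_assoc, this]

lemma fgbc_lint_kernel {γ : ℝ} (hγ : 0 < γ) {r t : ℝ} (hrt : r < t) :
    ∫⁻ s in Ioo r t, ENNReal.ofReal ((t - s) ^ (γ - 1))
      = ENNReal.ofReal ((t - r) ^ γ / γ) := by
  rw [Measure.restrict_congr_set Ioo_ae_eq_Ioc]
  rw [← ofReal_integral_eq_lintegral_ofReal ((fgbc_ii_left hγ t r t).1) ?_]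
  · rw [← intervalIntegral.integral_of_le hrt.le, fgbc_integral_kernel hγ hrt.le]
  · filter_upwards [ae_restrict_mem measurableSet_Ioc] with s hs
    exact Real.rpow_nonneg (by linarith [hs.2]) _

lemma fgbc_lint_beta {β γ : ℝ} (hβ : 0 < β) (hγ : 0 < γ) {r t : ℝ} (hrt : r < t) :
    ∫⁻ s in Ioo r t, ENNReal.ofReal ((t - s) ^ (β - 1) * (s - r) ^ (γ - 1))
      = ENNReal.ofReal ((t - r) ^ (β + γ - 1) * fgbcB β γ) := by
  rw [← ofReal_integral_eq_lintegral_ofReal (fgbc_beta_integrableOn hβ hγ hrt) ?_]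
  · congr 1
    rw [← integral_Ioc_eq_integral_Ioo, ← intervalIntegral.integral_of_le hrt.le,
      fgbc_beta_eval hβ hγ hrt]
  · filter_upwards [ae_restrict_mem measurableSet_Ioo] with s hs
    exact mul_nonneg (Real.rpow_nonneg (by linarith [hs.2]) _)
      (Real.rpow_nonneg (by linarith [hs.1]) _)

lemma fgbc_swap {β γ : ℝ} (hβ : 0 < β) (hγ : 0 < γ) {t : ℝ} (ht : 0 < t)
    {f : ℝ → ℝ≥0∞} (hf : Measurable f) :
    ∫⁻ s in Ioo 0 t, ENNReal.ofReal ((t - s) ^ (β - 1)) *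
        ∫⁻ r in Ioo 0 s, ENNReal.ofReal ((s - r) ^ (γ - 1)) * f r
      = ENNReal.ofReal (fgbcB β γ) *
        ∫⁻ r in Ioo 0 t, ENNReal.ofReal ((t - r) ^ (β + γ - 1)) * f r := by
  set S : Set (ℝ × ℝ) := {p | 0 < p.2 ∧ p.2 < p.1 ∧ p.1 < t} with hS
  set F : ℝ × ℝ → ℝ≥0∞ := fun p =>
    ENNReal.ofReal ((t - p.1) ^ (β - 1)) *
      (ENNReal.ofReal ((p.1 - p.2) ^ (γ - 1)) * f p.2) with hF
  have hSm : MeasurableSet S := by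
    apply MeasurableSet.inter (measurableSet_lt measurable_const measurable_snd)
    exact MeasurableSet.inter (measurableSet_lt measurable_snd measurable_fst)
      (measurableSet_lt measurable_fst measurable_const)
  have hFm : Measurable F := by
    refine (((measurable_const.sub measurable_fst).pow measurable_const).ennreal_ofReal).mul ?_
    exact (((measurable_fst.sub measurable_snd).pow measurable_const).ennreal_ofReal).mul
      (hf.comp measurable_snd)
  set K : ℝ → ℝ → ℝ≥0∞ := fun s r => S.indicator F (s, r) with hK
  have hKm : Measurable (Function.uncurry K) := hFm.indicator hSm
  have step1 : ∫⁻ s in Ioo 0 t, ENNReal.ofReal ((t - s) ^ (β - 1)) *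
        ∫⁻ r in Ioo 0 s, ENNReal.ofReal ((s - r) ^ (γ - 1)) * f r
      = ∫⁻ s, ∫⁻ r, K s r := by
    rw [← lintegral_indicator measurableSet_Ioo]
    apply lintegral_congr
    intro s
    by_cases hs : s ∈ Ioo 0 t
    · rw [indicator_of_mem hs]
      rw [← lintegral_const_mul' _ _ ENNReal.ofReal_ne_top]
      rw [← lintegral_indicator measurableSet_Ioo]
      apply lintegral_congr
      intro r
      by_cases hr : r ∈ Ioo 0 s
      · rw [indicator_of_mem hr]
        exact (indicator_of_mem (show (s, r) ∈ S from ⟨hr.1, hr.2, hs.2⟩) F).symm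
      · rw [indicator_of_notMem hr]
        exact (indicator_of_notMem
          (show (s, r) ∉ S from fun h => hr ⟨h.1, h.2.1⟩) F).symm
    · rw [indicator_of_notMem hs]
      have : ∀ r, K s r = 0 := fun r =>
        indicator_of_notMem (fun h => hs ⟨lt_trans h.1 h.2.1, h.2.2⟩) _
      simp [this]
  have step2 : ∫⁻ r, ∫⁻ s, K s r
      = ENNReal.ofReal (fgbcB β γ) *
        ∫⁻ r in Ioo 0 t, ENNReal.ofReal ((t - r) ^ (β + γ - 1)) * f r := by
    rw [← lintegral_const_mul' _ _ ENNReal.ofReal_ne_top,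
      ← lintegral_indicator measurableSet_Ioo]
    apply lintegral_congr
    intro r
    by_cases hr : r ∈ Ioo 0 t
    · have e1 : ∀ s, K s r = (Ioo r t).indicator (fun s => F (s, r)) s := by
        intro s
        by_cases hsr : s ∈ Ioo r t
        · rw [indicator_of_mem hsr]
          exact indicator_of_mem (show (s,r) ∈ S from ⟨hr.1, hsr.1, hsr.2⟩) F
        · rw [indicator_of_notMem hsr]
          exact indicator_of_notMem
            (show (s,r) ∉ S from fun h => hsr ⟨h.2.1, h.2.2⟩) F
      rw [indicator_of_mem hr]
      calc ∫⁻ s, K s r = ∫⁻ s in Ioo r t, F (s, r) := by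
            rw [← lintegral_indicator measurableSet_Ioo]
            exact lintegral_congr e1
        _ = ∫⁻ s in Ioo r t,
              ENNReal.ofReal ((t - s) ^ (β - 1) * (s - r) ^ (γ - 1)) * f r := by
            apply setLIntegral_congr_fun measurableSet_Ioo
            intro s hs
            rw [hF]
            beta_reduce
            rw [ENNReal.ofReal_mul (Real.rpow_nonneg (by linarith [hs.2]) _)]
            ring
        _ = (∫⁻ s in Ioo r t,
              ENNReal.ofReal ((t - s) ^ (β - 1) * (s - r) ^ (γ - 1))) * f r := by
            exact lintegral_mul_const _
              (((measurable_const.sub measurable_id).pow measurable_const).mul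
                ((measurable_id.sub measurable_const).pow measurable_const)).ennreal_ofReal
        _ = ENNReal.ofReal ((t - r) ^ (β + γ - 1) * fgbcB β γ) * f r := by
            rw [fgbc_lint_beta hβ hγ hr.2]
        _ = ENNReal.ofReal (fgbcB β γ) *
              (ENNReal.ofReal ((t - r) ^ (β + γ - 1)) * f r) := by
            rw [ENNReal.ofReal_mul (Real.rpow_nonneg (by linarith [hr.2]) _)]
            ring
    · rw [indicator_of_notMem hr]
      have : ∀ s, K s r = 0 := fun s =>
        indicator_of_notMem (fun h => hr ⟨h.1, lt_trans h.2.1 h.2.2⟩) _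
      simp [this]
  rw [step1, lintegral_lintegral_swap hKm.aemeasurable, step2]

lemma fgbc_conv_le {α : ℝ} (hα0 : 0 < α) {t : ℝ} (ht : 0 < t)
    {w : ℝ → ℝ} (hw0 : ∀ s, 0 ≤ w s) :
    ENNReal.ofReal (conv (rlKernel α) w t)
      ≤ ENNReal.ofReal (Real.Gamma α)⁻¹ *
        ∫⁻ s in Ioo 0 t, ENNReal.ofReal ((t - s) ^ (α - 1)) * ENNReal.ofReal (w s) := by
  have hΓ : 0 < Real.Gamma α := Real.Gamma_pos_of_pos hα0
  by_cases hint : IntervalIntegrable (fun s => rlKernel α (t - s) * w s) volume 0 t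
  · rw [conv, intervalIntegral.integral_of_le ht.le,
      ofReal_integral_eq_lintegral_ofReal hint.1 ?_]
    · rw [← Measure.restrict_congr_set Ioo_ae_eq_Ioc,
        ← lintegral_const_mul' _ _ ENNReal.ofReal_ne_top]
      apply lintegral_mono_ae
      filter_upwards [ae_restrict_mem measurableSet_Ioo] with s hs
      apply le_of_eq
      rw [rlKernel, div_eq_mul_inv, mul_comm ((t-s) ^ (α-1)), mul_assoc,
        ENNReal.ofReal_mul (by positivity),
        ENNReal.ofReal_mul (Real.rpow_nonneg (by linarith [hs.2]) _)]
    · filter_upwards [ae_restrict_mem measurableSet_Ioc] with s hs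
      exact mul_nonneg (div_nonneg (Real.rpow_nonneg (by linarith [hs.2]) _) hΓ.le) (hw0 s)
  · rw [conv, intervalIntegral.integral_undef hint]
    simp

lemma fgbc_conv_bound {α : ℝ} (hα0 : 0 < α) {T t B : ℝ} (hT : 0 < T) (ht : t ∈ Ioo 0 T)
    {w : ℝ → ℝ} (hB : 0 ≤ B)
    (hwB : ∀ᵐ s ∂(volume : Measure ℝ), s ∈ Ioo 0 T → w s ≤ B) (hw0 : ∀ s, 0 ≤ w s) :
    conv (rlKernel α) w t ≤ B * T ^ α / (α * Real.Gamma α) := by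
  have hΓ : 0 < Real.Gamma α := Real.Gamma_pos_of_pos hα0
  by_cases hint : IntervalIntegrable (fun s => rlKernel α (t - s) * w s) volume 0 t
  · have heq : (fun s => rlKernel α (t - s) * B)
        = fun s => (t - s) ^ (α - 1) * (B / Real.Gamma α) := by
      funext s; rw [rlKernel]; ring
    have hgii : IntervalIntegrable (fun s => rlKernel α (t - s) * B) volume 0 t := by
      rw [heq]; exact (fgbc_ii_left hα0 t 0 t).mul_const _
    have hbound : (fun s => rlKernel α (t - s) * w s)
        ≤ᵐ[volume.restrict (Icc 0 t)] fun s => rlKernel α (t - s) * B := by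
      rw [← Measure.restrict_congr_set Ioo_ae_eq_Icc]
      filter_upwards [ae_restrict_mem measurableSet_Ioo, ae_restrict_of_ae hwB]
        with s hs hsB
      have hwsB : w s ≤ B := hsB ⟨hs.1, lt_trans hs.2 ht.2⟩
      have hrl : 0 ≤ rlKernel α (t - s) := by
        rw [rlKernel]
        exact div_nonneg (Real.rpow_nonneg (by linarith [hs.2]) _) hΓ.le
      exact mul_le_mul_of_nonneg_left hwsB hrl
    calc conv (rlKernel α) w t
        ≤ ∫ s in (0:ℝ)..t, rlKernel α (t - s) * B :=
          intervalIntegral.integral_mono_ae_restrict ht.1.le hint hgii hbound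
      _ = (∫ s in (0:ℝ)..t, (t - s) ^ (α - 1)) * (B / Real.Gamma α) := by
          rw [heq, intervalIntegral.integral_mul_const]
      _ = t ^ α / α * (B / Real.Gamma α) := by
          rw [fgbc_integral_kernel hα0 ht.1.le, sub_zero]
      _ ≤ T ^ α / α * (B / Real.Gamma α) := by
          have : t ^ α ≤ T ^ α := Real.rpow_le_rpow ht.1.le (le_of_lt ht.2) hα0.le
          gcongr
      _ = B * T ^ α / (α * Real.Gamma α) := by ring
  · rw [conv, intervalIntegral.integral_undef hint]
    positivity

noncomputable def fgbcJ (w : ℝ → ℝ) (β t : ℝ) : ℝ≥0∞ :=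
  ∫⁻ s in Ioo 0 t, ENNReal.ofReal ((t - s) ^ (β - 1)) * ENNReal.ofReal (w s)

lemma fgbc_step {T α b : ℝ} (hT : 0 < T) (hα0 : 0 < α) (hb : 0 < b) {β : ℝ} (hβ : 0 < β)
    {w : ℝ → ℝ} (hwm : Measurable w)
    (hw : ∀ᵐ t ∂(volume.restrict (Ioo 0 T)),
      ENNReal.ofReal (w t) ≤ 1 + ENNReal.ofReal (b / Real.Gamma α) * fgbcJ w α t)
    {A M : ℝ} (hA : 0 ≤ A) (hM : 0 ≤ M)
    (hk : ∀ᵐ t ∂(volume.restrict (Ioo 0 T)),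
      ENNReal.ofReal (w t) ≤ ENNReal.ofReal A + ENNReal.ofReal M * fgbcJ w β t) :
    ∀ᵐ t ∂(volume.restrict (Ioo 0 T)),
      ENNReal.ofReal (w t) ≤ ENNReal.ofReal (A + M * (T ^ β / β)) +
        ENNReal.ofReal (M * (b / Real.Gamma α * fgbcB β α)) * fgbcJ w (β + α) t := by
  have hΓ : 0 < Real.Gamma α := Real.Gamma_pos_of_pos hα0
  have hc1 : 0 ≤ b / Real.Gamma α := by positivity
  have hkey : ∀ t ∈ Ioo 0 T, fgbcJ w β t ≤ ENNReal.ofReal (T ^ β / β) +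
      ENNReal.ofReal (b / Real.Gamma α * fgbcB β α) * fgbcJ w (β + α) t := by
    intro t ht
    have hbase' : ∀ᵐ s ∂(volume.restrict (Ioo 0 t)),
        ENNReal.ofReal (w s) ≤ 1 + ENNReal.ofReal (b / Real.Gamma α) * fgbcJ w α s :=
      ae_restrict_of_ae_restrict_of_subset (Ioo_subset_Ioo le_rfl ht.2.le) hw
    calc fgbcJ w β t
        ≤ ∫⁻ s in Ioo 0 t, ENNReal.ofReal ((t - s) ^ (β - 1)) *
            (1 + ENNReal.ofReal (b / Real.Gamma α) * fgbcJ w α s) := by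
          apply lintegral_mono_ae
          filter_upwards [hbase'] with s hs
          exact mul_le_mul_right hs _
      _ = ∫⁻ s in Ioo 0 t, (ENNReal.ofReal ((t - s) ^ (β - 1)) +
            ENNReal.ofReal (b / Real.Gamma α) *
              (ENNReal.ofReal ((t - s) ^ (β - 1)) * fgbcJ w α s)) := by
          apply lintegral_congr
          intro s
          ring
      _ = (∫⁻ s in Ioo 0 t, ENNReal.ofReal ((t - s) ^ (β - 1))) +
            ENNReal.ofReal (b / Real.Gamma α) *
              ∫⁻ s in Ioo 0 t, ENNReal.ofReal ((t - s) ^ (β - 1)) * fgbcJ w α s := by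
          have hmeas : Measurable (fun s : ℝ => ENNReal.ofReal ((t - s) ^ (β - 1))) := by
            apply Measurable.ennreal_ofReal
            exact (measurable_const.sub measurable_id).pow measurable_const
          rw [lintegral_add_left hmeas, lintegral_const_mul' _ _ ENNReal.ofReal_ne_top]
      _ = ENNReal.ofReal (t ^ β / β) + ENNReal.ofReal (b / Real.Gamma α) *
            (ENNReal.ofReal (fgbcB β α) * fgbcJ w (β + α) t) := by
          have h1 := fgbc_lint_kernel hβ ht.1
          rw [sub_zero] at h1
          rw [h1]
          congr 1
          rw [fgbcJ]
          rw [show (∫⁻ s in Ioo 0 t, ENNReal.ofReal ((t - s) ^ (β - 1)) * fgbcJ w α s)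
            = ENNReal.ofReal (fgbcB β α) *
              ∫⁻ r in Ioo 0 t, ENNReal.ofReal ((t - r) ^ (β + α - 1)) * ENNReal.ofReal (w r)
            from fgbc_swap hβ hα0 ht.1 hwm.ennreal_ofReal]
      _ ≤ ENNReal.ofReal (T ^ β / β) + ENNReal.ofReal (b / Real.Gamma α * fgbcB β α) *
            fgbcJ w (β + α) t := by
          apply add_le_add
          · apply ENNReal.ofReal_le_ofReal
            have : t ^ β ≤ T ^ β := Real.rpow_le_rpow ht.1.le ht.2.le hβ.le
            gcongr
          · apply le_of_eq
            rw [ENNReal.ofReal_mul hc1, mul_assoc]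
  filter_upwards [hk, ae_restrict_mem measurableSet_Ioo] with t hkt htmem
  calc ENNReal.ofReal (w t) ≤ ENNReal.ofReal A + ENNReal.ofReal M * fgbcJ w β t := hkt
    _ ≤ ENNReal.ofReal A + ENNReal.ofReal M * (ENNReal.ofReal (T ^ β / β) +
          ENNReal.ofReal (b / Real.Gamma α * fgbcB β α) * fgbcJ w (β + α) t) := by
        gcongr
        exact hkey t htmem
    _ = _ := by
        rw [ENNReal.ofReal_add hA (by positivity), ENNReal.ofReal_mul hM,
          ENNReal.ofReal_mul hM]
        ring

lemma fgbc_iter {T α b : ℝ} (hT : 0 < T) (hα0 : 0 < α) (hb : 0 < b) (n : ℕ) :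
    ∃ A M : ℝ, 0 ≤ A ∧ 0 ≤ M ∧ ∀ w : ℝ → ℝ, Measurable w →
      (∀ᵐ t ∂(volume.restrict (Ioo 0 T)),
        ENNReal.ofReal (w t) ≤ 1 + ENNReal.ofReal (b / Real.Gamma α) * fgbcJ w α t) →
      ∀ᵐ t ∂(volume.restrict (Ioo 0 T)),
        ENNReal.ofReal (w t) ≤ ENNReal.ofReal A +
          ENNReal.ofReal M * fgbcJ w (((n : ℝ) + 1) * α) t := by
  have hΓ : 0 < Real.Gamma α := Real.Gamma_pos_of_pos hα0
  induction n with
  | zero =>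
    refine ⟨1, b / Real.Gamma α, zero_le_one, by positivity, fun w hwm hw => ?_⟩
    have : ((0 : ℕ) : ℝ) + 1 = 1 := by norm_num
    rw [this, one_mul]
    filter_upwards [hw] with t h1
    rwa [ENNReal.ofReal_one]
  | succ n ih =>
    obtain ⟨A, M, hA, hM, hind⟩ := ih
    set β : ℝ := ((n : ℝ) + 1) * α with hβdef
    have hβ : 0 < β := by positivity
    refine ⟨A + M * (T ^ β / β), M * (b / Real.Gamma α * fgbcB β α),
      by positivity, ?_, fun w hwm hw => ?_⟩
    · have := fgbcB_nonneg β α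
      positivity
    · have hcast : ((n + 1 : ℕ) : ℝ) + 1 = ((n : ℝ) + 1) + 1 := by push_cast; ring
      have hexp : (((n + 1 : ℕ) : ℝ) + 1) * α = β + α := by rw [hcast, hβdef]; ring
      rw [hexp]
      exact fgbc_step hT hα0 hb hβ hwm hw hA hM (hind w hwm hw)

lemma fgbc_gronwall {T : ℝ} (hT : 0 < T) {A M : ℝ} (hA : 0 ≤ A) (hM : 0 ≤ M)
    {w : ℝ → ℝ} (hw0 : ∀ s, 0 ≤ w s) (hwint : IntegrableOn w (Ioo 0 T))
    (h : ∀ᵐ t ∂(volume.restrict (Ioo 0 T)),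
      ENNReal.ofReal (w t) ≤ ENNReal.ofReal A +
        ENNReal.ofReal M * ∫⁻ s in Ioo 0 t, ENNReal.ofReal (w s)) :
    ∀ᵐ t ∂(volume.restrict (Ioo 0 T)),
      w t ≤ A + M * (A * T + (M + 1) * (A * T * Real.exp ((M + 1) * T))) := by
  set w' : ℝ → ℝ := (Ioo 0 T).indicator w with hw'def
  have hw'int : Integrable w' := hwint.integrable_indicator measurableSet_Ioo
  have hw'0 : ∀ s, 0 ≤ w' s := fun s => Set.indicator_nonneg (fun s _ => hw0 s) s
  set ψ : ℝ → ℝ := fun x => ∫ s in (0:ℝ)..x, w' s with hψdef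
  have hψc : Continuous ψ :=
    intervalIntegral.continuous_primitive (fun a b => hw'int.intervalIntegrable) 0
  have hψ0 : ∀ x, 0 ≤ x → 0 ≤ ψ x := fun x hx =>
    intervalIntegral.integral_nonneg hx (fun s _ => hw'0 s)
  have hψrel : ∀ t ∈ Ioo 0 T, ENNReal.ofReal (ψ t)
      = ∫⁻ s in Ioo 0 t, ENNReal.ofReal (w s) := by
    intro t ht
    have e1 : ψ t = ∫ s in Ioc 0 t, w' s := intervalIntegral.integral_of_le ht.1.le
    rw [e1, ofReal_integral_eq_lintegral_ofReal hw'int.integrableOn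
      (Filter.Eventually.of_forall (fun s => hw'0 s)),
      ← Measure.restrict_congr_set Ioo_ae_eq_Ioc]
    apply setLIntegral_congr_fun measurableSet_Ioo
    intro s hs
    beta_reduce
    rw [hw'def, indicator_of_mem (show s ∈ Ioo 0 T from ⟨hs.1, lt_of_lt_of_le hs.2 ht.2.le⟩)]
  have hrealineq : ∀ᵐ s ∂(volume : Measure ℝ), s ∈ Ioo 0 T → w s ≤ A + M * ψ s := by
    rw [← ae_restrict_iff' measurableSet_Ioo]
    filter_upwards [h, ae_restrict_mem measurableSet_Ioo] with t h1 h2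
    rw [← hψrel t h2, ← ENNReal.ofReal_mul hM,
      ← ENNReal.ofReal_add hA (mul_nonneg hM (hψ0 t h2.1.le))] at h1
    exact (ENNReal.ofReal_le_ofReal_iff (by
      have := hψ0 t h2.1.le
      positivity)).mp h1
  set F : ℝ → ℝ := fun x => ∫ s in (0:ℝ)..x, ψ s with hFdef
  have hF' : ∀ x : ℝ, HasDerivAt F (ψ x) x := fun x =>
    intervalIntegral.integral_hasDerivAt_right (hψc.intervalIntegrable _ _)
      (hψc.stronglyMeasurableAtFilter _ _) hψc.continuousAt
  have hFc : ContinuousOn F (Icc 0 T) := fun x _ => (hF' x).continuousAt.continuousWithinAt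
  have hFnn : ∀ x ∈ Icc 0 T, 0 ≤ F x := fun x hx =>
    intervalIntegral.integral_nonneg hx.1 (fun s hs => hψ0 s hs.1)
  have hψint : ∀ x ∈ Icc 0 T, ψ x ≤ A * x + M * F x := by
    intro x hx
    have h1 : ψ x ≤ ∫ s in (0:ℝ)..x, (A + M * ψ s) := by
      apply intervalIntegral.integral_mono_ae_restrict hx.1 hw'int.intervalIntegrable
        ((continuous_const.add (continuous_const.mul hψc)).intervalIntegrable _ _)
      filter_upwards [ae_restrict_of_ae hrealineq, ae_restrict_mem measurableSet_Icc]
        with s hs1 hs2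
      by_cases hmem : s ∈ Ioo 0 T
      · rw [hw'def, indicator_of_mem hmem]
        exact hs1 hmem
      · rw [hw'def, indicator_of_notMem hmem]
        have := hψ0 s hs2.1
        exact add_nonneg hA (mul_nonneg hM this)
    calc ψ x ≤ ∫ s in (0:ℝ)..x, (A + M * ψ s) := h1
      _ = A * x + M * F x := by
        rw [intervalIntegral.integral_add (f := fun _ => A) (g := fun s => M * ψ s) (intervalIntegrable_const)
          ((continuous_const.mul hψc).intervalIntegrable _ _),
          intervalIntegral.integral_const, intervalIntegral.integral_const_mul,
          smul_eq_mul, sub_zero, mul_comm x A]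
  set M₃ : ℝ := M + 1 with hM₃def
  have hM₃ : 0 < M₃ := by positivity
  have hbnd : ∀ x ∈ Ico (0:ℝ) T, ‖ψ x‖ ≤ M₃ * ‖F x‖ + A * T := by
    intro x hx
    rw [Real.norm_eq_abs, abs_of_nonneg (hψ0 x hx.1), Real.norm_eq_abs,
      abs_of_nonneg (hFnn x ⟨hx.1, hx.2.le⟩)]
    have h2 := hψint x ⟨hx.1, hx.2.le⟩
    have h3 : A * x ≤ A * T := by nlinarith [hx.1, hx.2]
    have h4 : M * F x ≤ M₃ * F x := by
      have := hFnn x ⟨hx.1, hx.2.le⟩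
      nlinarith
    linarith
  have hgron := norm_le_gronwallBound_of_norm_deriv_right_le (f := F) (f' := ψ)
    (δ := 0) (K := M₃) (ε := A * T) (a := 0) (b := T) hFc
    (fun x _ => (hF' x).hasDerivWithinAt) (by simp [hFdef]) hbnd
  have hFbd : ∀ x ∈ Icc 0 T, F x ≤ A * T * Real.exp (M₃ * T) := by
    intro x hx
    have h5 := hgron x hx
    rw [Real.norm_eq_abs, abs_of_nonneg (hFnn x hx), gronwallBound_of_K_ne_0 hM₃.ne'] at h5
    have h1 : Real.exp (M₃ * (x - 0)) ≤ Real.exp (M₃ * T) :=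
      Real.exp_le_exp.mpr (by nlinarith [hx.1, hx.2])
    have h2 : A * T / M₃ ≤ A * T := div_le_self (by positivity) (by linarith)
    have h3 : 0 ≤ A * T / M₃ := by positivity
    nlinarith [Real.exp_pos (M₃ * T), Real.exp_pos (M₃ * (x - 0))]
  rw [show (∀ᵐ t ∂(volume.restrict (Ioo 0 T)),
      w t ≤ A + M * (A * T + (M + 1) * (A * T * Real.exp ((M + 1) * T)))) ↔ _
    from ae_restrict_iff' measurableSet_Ioo]
  · filter_upwards [hrealineq] with t h1
    intro h2
    have hψbd : ψ t ≤ A * T + M₃ * (A * T * Real.exp (M₃ * T)) := by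
      have h6 := hψint t ⟨h2.1.le, h2.2.le⟩
      have h7 := hFbd t ⟨h2.1.le, h2.2.le⟩
      have h8 : A * t ≤ A * T := by nlinarith [h2.1, h2.2]
      have h9 : M * F t ≤ M₃ * (A * T * Real.exp (M₃ * T)) := by
        have h10 := hFnn t ⟨h2.1.le, h2.2.le⟩
        nlinarith
      linarith
    have h13 := h1 h2
    rw [hM₃def] at hψbd
    have h11 : M * ψ t ≤ M * (A * T + (M + 1) * (A * T * Real.exp ((M + 1) * T))) :=
      mul_le_mul_of_nonneg_left hψbd hM
    linarith

lemma fgbc_main (T α b : ℝ) (hT : 0 < T) (hα : α ∈ Set.Ioo (0:ℝ) 1) (hb : 0 < b) :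
    ∃ C : ℝ, ∀ u v : ℝ → ℝ,
      IntegrableOn u (Ioo 0 T) → IntegrableOn v (Ioo 0 T) →
      (∀ᵐ t ∂(volume.restrict (Ioo 0 T)), 0 ≤ u t) →
      (∀ᵐ t ∂(volume.restrict (Ioo 0 T)), 0 ≤ v t) →
      (∀ᵐ t ∂(volume.restrict (Ioo 0 T)),
        u t + conv (rlKernel α) v t ≤ 1 + b * conv (rlKernel α) u t) →
      ∀ᵐ t ∂(volume.restrict (Ioo 0 T)),
        u t + conv (rlKernel α) v t ≤ C := by
  obtain ⟨hα0, hα1⟩ := hα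
  have hΓ : 0 < Real.Gamma α := Real.Gamma_pos_of_pos hα0
  set n₀ : ℕ := ⌈1/α⌉₊ with hn₀
  set β₀ : ℝ := ((n₀ : ℝ) + 1) * α with hβ₀def
  obtain ⟨A, M, hA, hM, hiter⟩ := fgbc_iter (T := T) (α := α) (b := b) hT hα0 hb n₀
  have hβ₀1 : 1 ≤ β₀ := by
    have h := Nat.le_ceil (1/α)
    have h2 : (1/α) * α ≤ (n₀ : ℝ) * α := mul_le_mul_of_nonneg_right h hα0.le
    rw [one_div, inv_mul_cancel₀ hα0.ne'] at h2
    have : β₀ = (n₀ : ℝ) * α + α := by rw [hβ₀def]; ring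
    nlinarith
  set M₂ : ℝ := M * T ^ (β₀ - 1) with hM₂def
  have hM₂ : 0 ≤ M₂ := mul_nonneg hM (Real.rpow_nonneg hT.le _)
  set B : ℝ := A + M₂ * (A * T + (M₂ + 1) * (A * T * Real.exp ((M₂ + 1) * T))) with hBdef
  have hB : 0 ≤ B := by
    have := Real.exp_pos ((M₂ + 1) * T)
    rw [hBdef]
    positivity
  refine ⟨1 + b * (B * T ^ α / (α * Real.Gamma α)), ?_⟩
  intro u v hu hv hu0 hv0 hyp
  have hum : AEStronglyMeasurable u (volume.restrict (Ioo 0 T)) := hu.aestronglyMeasurable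
  set u₀ : ℝ → ℝ := hum.mk u with hu₀def
  have hu₀meas : StronglyMeasurable u₀ := hum.stronglyMeasurable_mk
  have hu₀eq : u =ᵐ[volume.restrict (Ioo 0 T)] u₀ := hum.ae_eq_mk
  set w : ℝ → ℝ := fun s => max (u₀ s) 0 with hwdef
  have hwm : Measurable w := hu₀meas.measurable.max measurable_const
  have hw0 : ∀ s, 0 ≤ w s := fun s => le_max_right _ _
  have hwu : u =ᵐ[volume.restrict (Ioo 0 T)] w := by
    filter_upwards [hu₀eq, hu0] with s h1 h2
    rw [show w s = max (u₀ s) 0 from rfl, ← h1, max_eq_left h2]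
  have hwint : IntegrableOn w (Ioo 0 T) := hu.congr hwu
  have Hwu : ∀ᵐ s ∂(volume : Measure ℝ), s ∈ Ioo 0 T → u s = w s :=
    (ae_restrict_iff' measurableSet_Ioo).mp hwu
  have Hv : ∀ᵐ s ∂(volume : Measure ℝ), s ∈ Ioo 0 T → 0 ≤ v s :=
    (ae_restrict_iff' measurableSet_Ioo).mp hv0
  have hconv : ∀ t ∈ Ioo 0 T, conv (rlKernel α) u t = conv (rlKernel α) w t := by
    intro t ht
    rw [conv, conv]
    apply intervalIntegral.integral_congr_ae
    have hne : ∀ᵐ s ∂(volume : Measure ℝ), s ≠ t := by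
      rw [ae_iff]
      simp [not_not]
    filter_upwards [Hwu, hne] with s h1 h2
    intro h3
    rw [uIoc_of_le ht.1.le] at h3
    have hmem : s ∈ Ioo 0 T :=
      ⟨h3.1, lt_trans (lt_of_le_of_ne h3.2 h2) ht.2⟩
    rw [h1 hmem]
  have hconvw0 : ∀ t ∈ Ioo 0 T, 0 ≤ conv (rlKernel α) w t := by
    intro t ht
    rw [conv]
    apply intervalIntegral.integral_nonneg ht.1.le
    intro s hs
    have : 0 ≤ rlKernel α (t - s) := by
      rw [rlKernel]
      exact div_nonneg (Real.rpow_nonneg (by linarith [hs.2]) _) hΓ.le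
    exact mul_nonneg this (hw0 s)
  have hconvv0 : ∀ t ∈ Ioo 0 T, 0 ≤ conv (rlKernel α) v t := by
    intro t ht
    rw [conv]
    apply intervalIntegral.integral_nonneg_of_ae_restrict ht.1.le
    rw [← Measure.restrict_congr_set Ioo_ae_eq_Icc]
    filter_upwards [ae_restrict_mem measurableSet_Ioo, ae_restrict_of_ae Hv] with s hs h2
    have hrl : 0 ≤ rlKernel α (t - s) := by
      rw [rlKernel]
      exact div_nonneg (Real.rpow_nonneg (by linarith [hs.2]) _) hΓ.le
    exact mul_nonneg hrl (h2 ⟨hs.1, lt_trans hs.2 ht.2⟩)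
  have hHyp : ∀ᵐ t ∂(volume.restrict (Ioo 0 T)),
      ENNReal.ofReal (w t) ≤ 1 + ENNReal.ofReal (b / Real.Gamma α) * fgbcJ w α t := by
    filter_upwards [hyp, hwu, ae_restrict_mem measurableSet_Ioo] with t h1 h2 h3
    have hw_le : w t ≤ 1 + b * conv (rlKernel α) w t := by
      rw [← h2, ← hconv t h3]
      have := hconvv0 t h3
      linarith
    calc ENNReal.ofReal (w t)
        ≤ ENNReal.ofReal (1 + b * conv (rlKernel α) w t) := ENNReal.ofReal_le_ofReal hw_le
      _ = 1 + ENNReal.ofReal b * ENNReal.ofReal (conv (rlKernel α) w t) := by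
          rw [ENNReal.ofReal_add zero_le_one (mul_nonneg hb.le (hconvw0 t h3)),
            ENNReal.ofReal_one, ENNReal.ofReal_mul hb.le]
      _ ≤ 1 + ENNReal.ofReal b *
            (ENNReal.ofReal (Real.Gamma α)⁻¹ * fgbcJ w α t) := by
          gcongr
          rw [fgbcJ]
          exact fgbc_conv_le hα0 h3.1 hw0
      _ = 1 + ENNReal.ofReal (b / Real.Gamma α) * fgbcJ w α t := by
          rw [← mul_assoc, ← ENNReal.ofReal_mul hb.le, div_eq_mul_inv]
  have hkey := hiter w hwm hHyp
  have hkey2 : ∀ᵐ t ∂(volume.restrict (Ioo 0 T)),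
      ENNReal.ofReal (w t) ≤ ENNReal.ofReal A +
        ENNReal.ofReal M₂ * ∫⁻ s in Ioo 0 t, ENNReal.ofReal (w s) := by
    filter_upwards [hkey, ae_restrict_mem measurableSet_Ioo] with t h1 h2
    refine h1.trans ?_
    apply add_le_add_right
    have hJ : fgbcJ w β₀ t ≤
        ENNReal.ofReal (T ^ (β₀ - 1)) * ∫⁻ s in Ioo 0 t, ENNReal.ofReal (w s) := by
      rw [fgbcJ, ← lintegral_const_mul' _ _ ENNReal.ofReal_ne_top]
      apply lintegral_mono_ae
      filter_upwards [ae_restrict_mem measurableSet_Ioo] with s hs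
      apply mul_le_mul_left
      apply ENNReal.ofReal_le_ofReal
      exact Real.rpow_le_rpow (by linarith [hs.2]) (by linarith [hs.1, h2.2])
        (by linarith [hβ₀1])
    calc ENNReal.ofReal M * fgbcJ w β₀ t
        ≤ ENNReal.ofReal M *
          (ENNReal.ofReal (T ^ (β₀ - 1)) * ∫⁻ s in Ioo 0 t, ENNReal.ofReal (w s)) :=
          mul_le_mul_right hJ _
      _ = ENNReal.ofReal M₂ * ∫⁻ s in Ioo 0 t, ENNReal.ofReal (w s) := by
          rw [← mul_assoc, ← ENNReal.ofReal_mul hM]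
  have hgr := fgbc_gronwall hT hA hM₂ hw0 hwint hkey2
  have HwB : ∀ᵐ s ∂(volume : Measure ℝ), s ∈ Ioo 0 T → w s ≤ B :=
    (ae_restrict_iff' measurableSet_Ioo).mp hgr
  filter_upwards [hyp, ae_restrict_mem measurableSet_Ioo] with t h1 h3
  have hcb := fgbc_conv_bound hα0 hT h3 hB HwB hw0
  calc u t + conv (rlKernel α) v t ≤ 1 + b * conv (rlKernel α) u t := h1
    _ = 1 + b * conv (rlKernel α) w t := by rw [hconv t h3]
    _ ≤ 1 + b * (B * T ^ α / (α * Real.Gamma α)) :=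
        add_le_add_right (mul_le_mul_of_nonneg_left hcb hb.le) 1

/-- Fractional Grönwall–Bellman inequality with an additional convolved term. -/
theorem fractional_gronwall_bellman_convolved
    (T α b : ℝ) (hT : 0 < T) (hα : α ∈ Set.Ioo (0:ℝ) 1) (hb : 0 < b) :
    ∃ C : ℝ, ∀ (a : ℝ) (u v : ℝ → ℝ), 0 < a →
      MeasureTheory.IntegrableOn u (Set.Ioo 0 T) →
      MeasureTheory.IntegrableOn v (Set.Ioo 0 T) →
      (∀ᵐ t ∂(MeasureTheory.volume.restrict (Set.Ioo 0 T)), 0 ≤ u t) →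
      (∀ᵐ t ∂(MeasureTheory.volume.restrict (Set.Ioo 0 T)), 0 ≤ v t) →
      (∀ᵐ t ∂(MeasureTheory.volume.restrict (Set.Ioo 0 T)),
        u t + conv (rlKernel α) v t ≤ a + b * conv (rlKernel α) u t) →
      (∀ᵐ t ∂(MeasureTheory.volume.restrict (Set.Ioo 0 T)),
        u t + conv (rlKernel α) v t ≤ a * C) := by
  obtain ⟨C, hC⟩ := fgbc_main T α b hT hα hb
  refine ⟨C, ?_⟩
  intro a u v ha hu hv hu0 hv0 hyp
  have hconva : ∀ (f : ℝ → ℝ) (t : ℝ),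
      conv (rlKernel α) (fun s => f s / a) t = conv (rlKernel α) f t / a := by
    intro f t
    rw [conv, conv, ← intervalIntegral.integral_div]
    apply intervalIntegral.integral_congr
    intro s _
    show rlKernel α (t - s) * (f s / a) = rlKernel α (t - s) * f s / a
    rw [mul_div_assoc]
  have h1 := hC (fun s => u s / a) (fun s => v s / a) (hu.div_const a) (hv.div_const a)
    (by filter_upwards [hu0] with t h; exact div_nonneg h ha.le)
    (by filter_upwards [hv0] with t h; exact div_nonneg h ha.le)
    (by
      filter_upwards [hyp] with t h
      show u t / a + conv (rlKernel α) (fun s => v s / a) t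
        ≤ 1 + b * conv (rlKernel α) (fun s => u s / a) t
      rw [hconva v, hconva u]
      have h2 : (u t + conv (rlKernel α) v t) / a ≤ (a + b * conv (rlKernel α) u t) / a := by
        gcongr
      rw [add_div, add_div, div_self ha.ne', mul_div_assoc] at h2
      exact h2)
  filter_upwards [h1] with t h
  rw [hconva v] at h
  have h3 : (u t + conv (rlKernel α) v t) / a ≤ C := by
    rw [add_div]
    exact h
  rw [div_le_iff₀ ha] at h3
  linarith
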